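/- Let f̄ : ℝ^d → ℝ^d be globally Lipschitz, b_T ≥ 0, and suppose dist_N(Â, θ) = 0 for some Â ∈ ℝ^{d×d} and θ ∈ ℝ^d. Let v ∈ ℝ^d with ‖v‖ ≤ 1 and L ∈ ℝ^d be such that lim_{s↓0} (f̄(θ + s v) − f̄(θ))/s = L and lim_{s↓0} (f̄(θ − s v) − f̄(θ))/s = −L, i.e., the two-sided directional derivative of f̄ at θ along v exists and equals L. Then Âv = L. -/

import Mathlib

open Matrix Filter Topology

/-- `dist_N(Â, θ) = sup_{‖v‖≤1} ( max_{1≤i≤d} [ Âv − (f̄(θ+v) − f̄(θ)) ]_i − b_T ‖v‖² )`. -/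
noncomputable def distN (d : ℕ)
    (fbar : EuclideanSpace ℝ (Fin d) → EuclideanSpace ℝ (Fin d)) (bT : ℝ)
    (Ahat : Matrix (Fin d) (Fin d) ℝ) (θ : EuclideanSpace ℝ (Fin d)) : ℝ :=
  sSup {y : ℝ | ∃ v : EuclideanSpace ℝ (Fin d), ‖v‖ ≤ 1 ∧
    y = (⨆ i : Fin d, (Ahat.mulVec v i - (fbar (θ + v) i - fbar θ i))) - bT * ‖v‖ ^ 2}

lemma coord_le_norm {d : ℕ} (x : EuclideanSpace ℝ (Fin d)) (i : Fin d) :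
    |x i| ≤ ‖x‖ := by
  rw [EuclideanSpace.norm_eq]
  have h : |x i| = Real.sqrt (‖x i‖ ^ 2) := by
    rw [Real.sqrt_sq_eq_abs]; simp
  rw [h]
  apply Real.sqrt_le_sqrt
  exact Finset.single_le_sum (f := fun j => ‖x j‖ ^ 2) (fun j _ => by positivity)
    (Finset.mem_univ i)


/-- Let `f̄` be globally Lipschitz, `b_T ≥ 0`, and suppose
`dist_N(Â, θ) = 0`.  Let `v` with `‖v‖ ≤ 1` and `L ∈ ℝ^d` be such that the two-sided
directional derivative of `f̄` at `θ` along `v` exists and equals `L`, i.e.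
`lim_{s↓0} (f̄(θ + s v) − f̄(θ))/s = L` and `lim_{s↓0} (f̄(θ − s v) − f̄(θ))/s = −L`.
Then `Âv = L`. -/
theorem stmt_13 (d : ℕ) (hd : 0 < d)
    (fbar : EuclideanSpace ℝ (Fin d) → EuclideanSpace ℝ (Fin d))
    (K : NNReal) (hLip : LipschitzWith K fbar)
    (bT : ℝ) (hbT : 0 ≤ bT)
    (Ahat : Matrix (Fin d) (Fin d) ℝ) (θ : EuclideanSpace ℝ (Fin d))
    (hdist : distN d fbar bT Ahat θ = 0)
    (v : EuclideanSpace ℝ (Fin d)) (hv : ‖v‖ ≤ 1)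
    (L : EuclideanSpace ℝ (Fin d))
    (hpos : Tendsto (fun s : ℝ => s⁻¹ • (fbar (θ + s • v) - fbar θ))
      (nhdsWithin 0 (Set.Ioi 0)) (nhds L))
    (hneg : Tendsto (fun s : ℝ => s⁻¹ • (fbar (θ - s • v) - fbar θ))
      (nhdsWithin 0 (Set.Ioi 0)) (nhds (-L))) :
    ∀ i : Fin d, Ahat.mulVec v i = L i := by
  have hne : Nonempty (Fin d) := ⟨⟨0, hd⟩⟩
  -- the set is bounded above
  set S := {y : ℝ | ∃ v : EuclideanSpace ℝ (Fin d), ‖v‖ ≤ 1 ∧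
    y = (⨆ i : Fin d, (Ahat.mulVec v i - (fbar (θ + v) i - fbar θ i))) - bT * ‖v‖ ^ 2}
    with hS
  have hbdd : BddAbove S := by
    refine ⟨(∑ a, ∑ b, |Ahat a b|) + K, ?_⟩
    rintro y ⟨u, hu, rfl⟩
    have h1 : (⨆ j : Fin d, (Ahat.mulVec u j - (fbar (θ + u) j - fbar θ j)))
        ≤ (∑ a, ∑ b, |Ahat a b|) + K := by
      apply ciSup_le
      intro a
      have hA : |Ahat.mulVec u a| ≤ ∑ a', ∑ b, |Ahat a' b| := by
        have hdef : Ahat.mulVec u a = ∑ b, Ahat a b * u b := rfl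
        calc |Ahat.mulVec u a| ≤ ∑ b, |Ahat a b * u b| := by
              rw [hdef]; exact Finset.abs_sum_le_sum_abs _ _
          _ ≤ ∑ b, |Ahat a b| := by
              apply Finset.sum_le_sum; intro b _
              rw [abs_mul]
              calc |Ahat a b| * |u b| ≤ |Ahat a b| * 1 := by
                    apply mul_le_mul_of_nonneg_left _ (abs_nonneg _)
                    exact le_trans (coord_le_norm u b) hu
                _ = |Ahat a b| := mul_one _
          _ ≤ _ := Finset.single_le_sum
              (f := fun a' => ∑ b, |Ahat a' b|)
              (fun a' _ => Finset.sum_nonneg fun b _ => abs_nonneg _) (Finset.mem_univ a)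
      have hf : |fbar (θ + u) a - fbar θ a| ≤ (K : ℝ) := by
        have h2 : |(fbar (θ + u) - fbar θ) a| ≤ ‖fbar (θ + u) - fbar θ‖ :=
          coord_le_norm _ a
        have hL := hLip.dist_le_mul (θ + u) θ
        rw [dist_eq_norm, dist_eq_norm] at hL
        have h3 : ‖θ + u - θ‖ = ‖u‖ := by congr 1; abel
        rw [h3] at hL
        have : (fbar (θ + u) - fbar θ) a = fbar (θ + u) a - fbar θ a := rfl
        rw [this] at h2
        calc |fbar (θ + u) a - fbar θ a| ≤ ‖fbar (θ + u) - fbar θ‖ := h2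
          _ ≤ K * ‖u‖ := hL
          _ ≤ K * 1 := by
              apply mul_le_mul_of_nonneg_left hu (by positivity)
          _ = K := mul_one _
      have := abs_le.mp hA
      have := abs_le.mp hf
      linarith [(abs_le.mp hA).2, (abs_le.mp hf).1]
    have : 0 ≤ bT * ‖u‖ ^ 2 := by positivity
    linarith
  -- each admissible w gives a coordinatewise bound
  have key : ∀ w : EuclideanSpace ℝ (Fin d), ‖w‖ ≤ 1 → ∀ j : Fin d,
      Ahat.mulVec w j - (fbar (θ + w) j - fbar θ j) ≤ bT * ‖w‖ ^ 2 := by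
    intro w hw j
    have hmem : (⨆ i : Fin d, (Ahat.mulVec w i - (fbar (θ + w) i - fbar θ i)))
        - bT * ‖w‖ ^ 2 ∈ S := ⟨w, hw, rfl⟩
    have hle : (⨆ i : Fin d, (Ahat.mulVec w i - (fbar (θ + w) i - fbar θ i)))
        - bT * ‖w‖ ^ 2 ≤ 0 := by
      have := le_csSup hbdd hmem
      rwa [show sSup S = 0 from hdist] at this
    have hj : Ahat.mulVec w j - (fbar (θ + w) j - fbar θ j)
        ≤ ⨆ i : Fin d, (Ahat.mulVec w i - (fbar (θ + w) i - fbar θ i)) :=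
      le_ciSup (f := fun i : Fin d => Ahat.mulVec w i - (fbar (θ + w) i - fbar θ i))
        (Set.Finite.bddAbove (Set.finite_range _)) j
    linarith
  intro i
  -- coordinate limits
  have hproj : Continuous fun x : EuclideanSpace ℝ (Fin d) => x i :=
    (EuclideanSpace.proj i (𝕜 := ℝ)).continuous
  have hposi : Tendsto (fun s : ℝ => s⁻¹ * (fbar (θ + s • v) i - fbar θ i))
      (nhdsWithin 0 (Set.Ioi 0)) (nhds (L i)) := by
    have := (hproj.tendsto L).comp hpos
    simpa [Function.comp_def] using this
  have hnegi : Tendsto (fun s : ℝ => s⁻¹ * (fbar (θ - s • v) i - fbar θ i))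
      (nhdsWithin 0 (Set.Ioi 0)) (nhds (-(L i))) := by
    have := (hproj.tendsto (-L)).comp hneg
    simpa [Function.comp_def] using this
  have hsnorm : ∀ s : ℝ, s ∈ Set.Ioc (0:ℝ) 1 → ‖s • v‖ ≤ 1 := by
    intro s hs
    rw [norm_smul, Real.norm_eq_abs, abs_of_pos hs.1]
    calc s * ‖v‖ ≤ 1 * 1 := mul_le_mul hs.2 hv (norm_nonneg v) zero_le_one
      _ = 1 := one_mul 1
  have hIoc : Set.Ioc (0:ℝ) 1 ∈ nhdsWithin (0:ℝ) (Set.Ioi 0) :=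
    Ioc_mem_nhdsGT_of_mem ⟨le_refl 0, one_pos⟩
  -- forward direction
  have hub : Ahat.mulVec v i ≤ L i := by
    have hev : ∀ᶠ s in nhdsWithin (0:ℝ) (Set.Ioi 0),
        Ahat.mulVec v i ≤ s⁻¹ * (fbar (θ + s • v) i - fbar θ i) + bT * s * ‖v‖ ^ 2 := by
      filter_upwards [hIoc] with s hs
      have hk := key (s • v) (hsnorm s hs) i
      have hmv : Ahat.mulVec (s • v) i = s * Ahat.mulVec v i := by
        rw [Matrix.mulVec_smul]; rfl
      rw [WithLp.ofLp_smul, hmv, norm_smul, Real.norm_eq_abs, abs_of_pos hs.1, mul_pow] at hk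
      have hs0 : (0:ℝ) < s := hs.1
      have h5 : s * (s⁻¹ * (fbar (θ + s • v) i - fbar θ i) + bT * s * ‖v‖ ^ 2)
          = (fbar (θ + s • v) i - fbar θ i) + bT * (s ^ 2 * ‖v‖ ^ 2) := by
        field_simp
      rw [← mul_le_mul_iff_right₀ hs0, h5]; linarith
    have htend : Tendsto (fun s : ℝ => s⁻¹ * (fbar (θ + s • v) i - fbar θ i)
        + bT * s * ‖v‖ ^ 2) (nhdsWithin 0 (Set.Ioi 0)) (nhds (L i)) := by
      have h0 : Tendsto (fun s : ℝ => bT * s * ‖v‖ ^ 2)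
          (nhdsWithin (0:ℝ) (Set.Ioi 0)) (nhds 0) := by
        have : Tendsto (fun s : ℝ => bT * s * ‖v‖ ^ 2) (nhds (0:ℝ))
            (nhds (bT * 0 * ‖v‖ ^ 2)) := by
          exact (tendsto_id.const_mul bT).mul_const _
        simpa using this.mono_left nhdsWithin_le_nhds
      simpa using hposi.add h0
    exact ge_of_tendsto htend hev
  -- backward direction
  have hlb : L i ≤ Ahat.mulVec v i := by
    have hev : ∀ᶠ s in nhdsWithin (0:ℝ) (Set.Ioi 0),
        -(Ahat.mulVec v i) ≤ s⁻¹ * (fbar (θ - s • v) i - fbar θ i) + bT * s * ‖v‖ ^ 2 := by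
      filter_upwards [hIoc] with s hs
      have hn1 : ‖(-(s • v) : EuclideanSpace ℝ (Fin d))‖ ≤ 1 := by
        rw [norm_neg]; exact hsnorm s hs
      have hk := key (-(s • v)) hn1 i
      have hθ : θ + -(s • v) = θ - s • v := by abel
      rw [hθ] at hk
      have hmv : Ahat.mulVec (-(s • v)) i = -(s * Ahat.mulVec v i) := by
        rw [Matrix.mulVec_neg, Matrix.mulVec_smul]; rfl
      rw [WithLp.ofLp_neg, WithLp.ofLp_smul, hmv, norm_neg, norm_smul, Real.norm_eq_abs, abs_of_pos hs.1, mul_pow] at hk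
      have hs0 : (0:ℝ) < s := hs.1
      have h5 : s * (s⁻¹ * (fbar (θ - s • v) i - fbar θ i) + bT * s * ‖v‖ ^ 2)
          = (fbar (θ - s • v) i - fbar θ i) + bT * (s ^ 2 * ‖v‖ ^ 2) := by
        field_simp
      rw [← mul_le_mul_iff_right₀ hs0, h5]; linarith
    have htend : Tendsto (fun s : ℝ => s⁻¹ * (fbar (θ - s • v) i - fbar θ i)
        + bT * s * ‖v‖ ^ 2) (nhdsWithin 0 (Set.Ioi 0)) (nhds (-(L i))) := by
      have h0 : Tendsto (fun s : ℝ => bT * s * ‖v‖ ^ 2)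
          (nhdsWithin (0:ℝ) (Set.Ioi 0)) (nhds 0) := by
        have : Tendsto (fun s : ℝ => bT * s * ‖v‖ ^ 2) (nhds (0:ℝ))
            (nhds (bT * 0 * ‖v‖ ^ 2)) := by
          exact (tendsto_id.const_mul bT).mul_const _
        simpa using this.mono_left nhdsWithin_le_nhds
      simpa using hnegi.add h0
    have := ge_of_tendsto htend hev
    linarith
  linarith
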